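/- Let A be an algebraic curvature tensor on (V,⟨·,·⟩) and let y ∈ V be a vector such that J(x)y = 0 for every x ∈ V. Then A(x₁,x₂,x₃,y) = 0 for all x₁, x₂, x₃ ∈ V. -/
import Mathlib


noncomputable section

/-- The Jacobi operator `J(x) : y ↦ 𝒜(y,x)x` of a (tri)linear curvature operator `𝒜`. -/
def jacobiOp {V : Type*} [AddCommGroup V] [Module ℝ V]
    (Aop : V →ₗ[ℝ] V →ₗ[ℝ] V →ₗ[ℝ] V) (x : V) : V →ₗ[ℝ] V where
  toFun y := Aop y x x
  map_add' y z := by simp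
  map_smul' c y := by simp

/-- The polarized Jacobi operator `J(x,y) : z ↦ ½(𝒜(z,x)y + 𝒜(z,y)x)`. -/
def jacobiPol {V : Type*} [AddCommGroup V] [Module ℝ V]
    (Aop : V →ₗ[ℝ] V →ₗ[ℝ] V →ₗ[ℝ] V) (x y : V) : V →ₗ[ℝ] V where
  toFun z := (1/2 : ℝ) • (Aop z x y + Aop z y x)
  map_add' a b := by simp [smul_add]; abel
  map_smul' c a := by simp [smul_add, smul_comm c]

/-- If `y ∈ V` satisfies `J(x)y = 0` for every `x ∈ V`, then
`A(x₁,x₂,x₃,y) = 0` for all `x₁, x₂, x₃ ∈ V`. -/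
theorem jacobi_annihilates_implies_curvature_annihilates
    {V : Type*} [AddCommGroup V] [Module ℝ V] [FiniteDimensional ℝ V]
    -- a nondegenerate symmetric bilinear form ⟨·,·⟩ on V
    (B : LinearMap.BilinForm ℝ V)
    (hBsymm : ∀ x y : V, B x y = B y x)
    (hBnd : ∀ x : V, (∀ y : V, B x y = 0) → x = 0)
    -- the curvature operator 𝒜, with `A x y z w = ⟨𝒜(x,y)z, w⟩`
    (Aop : V →ₗ[ℝ] V →ₗ[ℝ] V →ₗ[ℝ] V)
    -- A(x,y,z,w) = -A(y,x,z,w)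
    (hA1 : ∀ x y z w : V, B (Aop x y z) w = - B (Aop y x z) w)
    -- A(x,y,z,w) = A(z,w,x,y)
    (hA2 : ∀ x y z w : V, B (Aop x y z) w = B (Aop z w x) y)
    -- first Bianchi identity
    (hA3 : ∀ x y z w : V, B (Aop x y z) w + B (Aop y z x) w + B (Aop z x y) w = 0)
    (y : V) (hy : ∀ x : V, jacobiOp Aop x y = 0) :
    ∀ x₁ x₂ x₃ : V, B (Aop x₁ x₂ x₃) y = 0 := by
  -- J(x)y = 0 means Aop y x x = 0 for every x
  have h0 : ∀ x : V, Aop y x x = 0 := by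
    intro x
    simpa [jacobiOp] using hy x
  -- polarization: Aop y a b + Aop y b a = 0
  have hpol : ∀ a b : V, Aop y a b + Aop y b a = 0 := by
    intro a b
    have h := h0 (a + b)
    simp only [map_add, LinearMap.add_apply, h0 a, h0 b, zero_add, add_zero] at h
    linear_combination (norm := abel) h
  -- F(a,b,c) := B (Aop y a b) c is antisymmetric in (a,b)
  have hF : ∀ a b c : V, B (Aop y a b) c = - B (Aop y b a) c := by
    intro a b c
    have := congrArg (fun v => B v c) (hpol a b)
    simp only [map_add, LinearMap.add_apply, map_zero, LinearMap.zero_apply] at this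
    linarith
  -- key cyclic relation: 2 F(a,b,c) = -F(c,a,b)
  have hkey : ∀ a b c : V, 2 * B (Aop y a b) c = - B (Aop y c a) b := by
    intro a b c
    have hb := hA3 y a b c
    have h1 : B (Aop b y a) c = B (Aop y a b) c := by
      have e1 := hA1 b y a c
      have e2 := hF b a c
      linarith
    have h2 : B (Aop a b y) c = B (Aop y c a) b := hA2 a b y c
    linarith [hb, h1, h2]
  -- hence F vanishes identically
  have hFzero : ∀ a b c : V, B (Aop y a b) c = 0 := by
    intro a b c
    have k1 := hkey a b c
    have k2 := hkey c a b
    have k3 := hkey b c a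
    linarith
  intro x₁ x₂ x₃
  rw [hA2 x₁ x₂ x₃ y, hA1 x₃ y x₁ x₂, hFzero x₃ x₁ x₂]
  ring
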